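/- If a randomized mechanism f satisfies (α, ε)-Rényi differential privacy for some α > 1, then f satisfies (ε + log(1/δ)/(α-1), δ)-differential privacy for every δ ∈ (0,1). -/

import Mathlib

open Real MeasureTheory

/-- Mironov's RDP-to-DP conversion: if a mechanism (given by positive densities `p x` with
respect to a base measure `μ`) satisfies `(α, ε)`-Rényi differential privacy, then it satisfies
`(ε + log(1/δ)/(α-1), δ)`-differential privacy for every `δ ∈ (0,1)`. -/
theorem rdp_to_dp {D Ω : Type*} [MeasurableSpace Ω] (μ : Measure Ω) [SigmaFinite μ]
    (adj : D → D → Prop) (p : D → Ω → ℝ) (α ε δ : ℝ) (hα : 1 < α)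
    (hδ₀ : 0 < δ) (hδ₁ : δ < 1)
    (hmeas : ∀ x, Measurable (p x))
    (hpos : ∀ x ω, 0 < p x ω)
    (hprob : ∀ x, ∫ ω, p x ω ∂μ = 1)
    (hint : ∀ x y, adj x y → Integrable (fun ω => (p x ω / p y ω) ^ α * p y ω) μ)
    (hRDP : ∀ x y, adj x y →
      (1 / (α - 1)) * Real.log (∫ ω, (p x ω / p y ω) ^ α * p y ω ∂μ) ≤ ε) :
    ∀ x y, adj x y → ∀ Y : Set Ω, MeasurableSet Y →
      ∫ ω in Y, p x ω ∂μ
        ≤ Real.exp (ε + Real.log (1 / δ) / (α - 1)) * ∫ ω in Y, p y ω ∂μ + δ := by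
  intro x y hxy Y hY
  have hα1 : (0:ℝ) < α - 1 := by linarith
  set ε' : ℝ := ε + Real.log (1 / δ) / (α - 1) with hε'
  have hintp : ∀ z, Integrable (p z) μ := by
    intro z
    by_contra h
    have hz := hprob z
    rw [integral_undef h] at hz
    norm_num at hz
  have hIx := hintp x
  have hIy := hintp y
  have hIg := hint x y hxy
  set A : Set Ω := {ω | Real.exp ε' * p y ω < p x ω} with hAdef
  have hAm : MeasurableSet A := measurableSet_lt (measurable_const.mul (hmeas y)) (hmeas x)
  -- pointwise bound on A
  have hkey : ∀ ω ∈ A, p x ω ≤ Real.exp (-(α-1)*ε') * ((p x ω / p y ω) ^ α * p y ω) := by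
    intro ω hω
    have hpy := hpos y ω
    have hpx := hpos x ω
    have hω' : Real.exp ε' * p y ω < p x ω := hω
    set t : ℝ := p x ω / p y ω with htdef
    have ht1 : Real.exp ε' < t := (lt_div_iff₀ hpy).2 (by linarith)
    have ht0 : (0:ℝ) < t := lt_trans (Real.exp_pos _) ht1
    have h2 : Real.exp ((α-1)*ε') ≤ t ^ (α-1) := by
      rw [mul_comm, Real.exp_mul]
      exact Real.rpow_le_rpow (Real.exp_pos _).le ht1.le hα1.le
    have h3 : t ^ α * p y ω = t ^ (α-1) * p x ω := by
      have : α = (α - 1) + 1 := by ring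
      rw [this, Real.rpow_add ht0, Real.rpow_one]
      rw [htdef]
      field_simp
      ring_nf
    have h4 : Real.exp ((α-1)*ε') * p x ω ≤ t ^ α * p y ω := by
      rw [h3]
      exact mul_le_mul_of_nonneg_right h2 hpx.le
    have h5 : p x ω = Real.exp (-(α-1)*ε') * (Real.exp ((α-1)*ε') * p x ω) := by
      have hz : -(α-1)*ε' + (α-1)*ε' = 0 := by ring
      rw [← mul_assoc, ← Real.exp_add, hz, Real.exp_zero, one_mul]
    rw [h5]
    exact mul_le_mul_of_nonneg_left h4 (Real.exp_pos _).le
  -- bound on A: at most δ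
  have hAbound : ∫ ω in A, p x ω ∂μ ≤ δ := by
    have step1 : ∫ ω in A, p x ω ∂μ
        ≤ ∫ ω in A, Real.exp (-(α-1)*ε') * ((p x ω / p y ω) ^ α * p y ω) ∂μ :=
      setIntegral_mono_on hIx.integrableOn ((hIg.const_mul _).integrableOn) hAm hkey
    have step2 : ∫ ω in A, Real.exp (-(α-1)*ε') * ((p x ω / p y ω) ^ α * p y ω) ∂μ
        = Real.exp (-(α-1)*ε') * ∫ ω in A, (p x ω / p y ω) ^ α * p y ω ∂μ :=
      integral_const_mul _ _
    have step3 : ∫ ω in A, (p x ω / p y ω) ^ α * p y ω ∂μ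
        ≤ ∫ ω, (p x ω / p y ω) ^ α * p y ω ∂μ :=
      setIntegral_le_integral hIg (ae_of_all _ fun ω =>
        mul_nonneg (Real.rpow_nonneg (div_nonneg (hpos x ω).le (hpos y ω).le) _) (hpos y ω).le)
    have step4 : ∫ ω, (p x ω / p y ω) ^ α * p y ω ∂μ ≤ Real.exp ((α-1)*ε) := by
      rcases le_or_gt (∫ ω, (p x ω / p y ω) ^ α * p y ω ∂μ) 0 with h | h
      · exact h.trans (Real.exp_pos _).le
      · have hR := hRDP x y hxy
        have hlog : Real.log (∫ ω, (p x ω / p y ω) ^ α * p y ω ∂μ) ≤ (α-1)*ε := by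
          have h6 := mul_le_mul_of_nonneg_left hR hα1.le
          rw [← mul_assoc, mul_one_div, div_self hα1.ne', one_mul] at h6
          exact h6
        calc ∫ ω, (p x ω / p y ω) ^ α * p y ω ∂μ
            = Real.exp (Real.log (∫ ω, (p x ω / p y ω) ^ α * p y ω ∂μ)) :=
              (Real.exp_log h).symm
          _ ≤ Real.exp ((α-1)*ε) := Real.exp_le_exp.2 hlog
    have hfinal : Real.exp (-(α-1)*ε') * Real.exp ((α-1)*ε) = δ := by
      rw [← Real.exp_add]
      have hexp : -(α-1)*ε' + (α-1)*ε = Real.log δ := by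
        rw [hε', one_div, Real.log_inv]
        field_simp
        ring
      rw [hexp, Real.exp_log hδ₀]
    calc ∫ ω in A, p x ω ∂μ
        ≤ Real.exp (-(α-1)*ε') * ∫ ω in A, (p x ω / p y ω) ^ α * p y ω ∂μ := by
          rw [← step2]; exact step1
      _ ≤ Real.exp (-(α-1)*ε') * Real.exp ((α-1)*ε) :=
          mul_le_mul_of_nonneg_left (step3.trans step4) (Real.exp_pos _).le
      _ = δ := hfinal
  -- split Y
  have hsplit : ∫ ω in Y ∩ A, p x ω ∂μ + ∫ ω in Y \ A, p x ω ∂μ = ∫ ω in Y, p x ω ∂μ :=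
    integral_inter_add_diff hAm hIx.integrableOn
  have hb1 : ∫ ω in Y ∩ A, p x ω ∂μ ≤ ∫ ω in A, p x ω ∂μ :=
    setIntegral_mono_set hIx.integrableOn (ae_of_all _ fun ω => (hpos x ω).le)
      (HasSubset.Subset.eventuallyLE Set.inter_subset_right)
  have hb2 : ∫ ω in Y \ A, p x ω ∂μ ≤ ∫ ω in Y \ A, Real.exp ε' * p y ω ∂μ :=
    setIntegral_mono_on hIx.integrableOn ((hIy.const_mul _).integrableOn) (hY.diff hAm)
      (fun ω hω => not_lt.1 hω.2)
  have hb3 : ∫ ω in Y \ A, Real.exp ε' * p y ω ∂μ ≤ Real.exp ε' * ∫ ω in Y, p y ω ∂μ := by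
    rw [integral_const_mul]
    exact mul_le_mul_of_nonneg_left
      (setIntegral_mono_set hIy.integrableOn (ae_of_all _ fun ω => (hpos y ω).le)
        (HasSubset.Subset.eventuallyLE Set.diff_subset)) (Real.exp_pos _).le
  linarith
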